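/- The quintuple (H(X,Ω), m, 1, Δ_λ, ε) is a k-bialgebra: H(X,Ω) is a unital associative algebra under concatenation, (H(X,Ω), Δ_λ, ε) is a coassociative counital coalgebra, and Δ_λ and ε are algebra homomorphisms. -/

import Mathlib

open scoped TensorProduct

universe u v w u'

/-- Decorated planar rooted trees: internal vertices are decorated by `Ω`,
leaves are decorated by `X ⊔ Ω` (a leaf decorated by `ω : Ω` is `node ω []`). -/
inductive PTree (X : Type u) (Ω : Type v) : Type (max u v)
  | leafX : X → PTree X Ω
  | node : Ω → List (PTree X Ω) → PTree X Ω

namespace Moerdijk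

variable {X : Type u} {Ω : Type v}

/-- `ℱ(X,Ω)`: decorated planar rooted forests, i.e. the free monoid on decorated
planar rooted trees under concatenation. -/
abbrev RForest (X : Type u) (Ω : Type v) := FreeMonoid (PTree X Ω)

/-- The single-vertex forest `•ₓ` for `x ∈ X`. -/
def leafF (x : X) : RForest X Ω := FreeMonoid.of (PTree.leafX x)

/-- Grafting of a forest onto a new common root decorated by `ω`. -/
def graft (ω : Ω) (F : RForest X Ω) : RForest X Ω :=
  FreeMonoid.of (PTree.node ω (FreeMonoid.toList F))

variable (k : Type w) [CommRing k]

/-- `H(X,Ω)`: the free `k`-module on decorated planar rooted forests, a unital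
associative algebra under the concatenation product. -/
abbrev RAlg (X : Type u) (Ω : Type v) := MonoidAlgebra k (RForest X Ω)

/-- The basis element of `H(X,Ω)` corresponding to a forest `F`. -/
noncomputable def ofF (F : RForest X Ω) : RAlg k X Ω := MonoidAlgebra.of k (RForest X Ω) F

/-- The grafting operator `B⁺_ω : H(X,Ω) → H(X,Ω)` as a linear map. -/
noncomputable def Bplus (ω : Ω) : RAlg k X Ω →ₗ[k] RAlg k X Ω :=
  MonoidAlgebra.mapDomainLinearMap k k (graft ω)

/-- The value of the coproduct `Δ_λ` on a decorated planar rooted tree: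
`Δ_λ(•ₓ) = •ₓ ⊗ 1 + 1 ⊗ •ₓ + λ •ₓ ⊗ •ₓ` and
`Δ_λ(B⁺_ω(F)) = (B⁺_ω ⊗ id)Δ_λ(F) + (id ⊗ B⁺_ω)Δ_λ(F)`. -/
noncomputable def DeltaT (lam : k) : PTree X Ω → (RAlg k X Ω ⊗[k] RAlg k X Ω)
  | .leafX x =>
      ofF k (leafF x) ⊗ₜ[k] 1 + 1 ⊗ₜ[k] ofF k (leafF x)
        + lam • (ofF k (leafF x) ⊗ₜ[k] ofF k (leafF x))
  | .node ω ts =>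
      ((TensorProduct.map (Bplus k ω) LinearMap.id
        + TensorProduct.map LinearMap.id (Bplus k ω) :
          (RAlg k X Ω ⊗[k] RAlg k X Ω) →ₗ[k] (RAlg k X Ω ⊗[k] RAlg k X Ω)))
        ((ts.attach.map fun t => DeltaT lam t.1).prod)
decreasing_by
  have := List.sizeOf_lt_of_mem t.2
  simp only [PTree.node.sizeOf_spec]
  omega

/-- The value of the coproduct `Δ_λ` on a forest: `Δ_λ(T₁⋯Tₘ) = Δ_λ(T₁)⋯Δ_λ(Tₘ)`. -/
noncomputable def DeltaF (lam : k) (F : RForest X Ω) : RAlg k X Ω ⊗[k] RAlg k X Ω :=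
  ((FreeMonoid.toList F).map (DeltaT k lam)).prod

/-- The coproduct `Δ_λ : H(X,Ω) → H(X,Ω) ⊗ H(X,Ω)`. -/
noncomputable def Delta (lam : k) : RAlg k X Ω →ₗ[k] (RAlg k X Ω ⊗[k] RAlg k X Ω) :=
  (Finsupp.lsum k fun F => LinearMap.toSpanSingleton k _ (DeltaF k lam F)) ∘ₗ
    (MonoidAlgebra.coeffLinearEquiv k).toLinearMap

/-- The counit `ε : H(X,Ω) → k`, sending the empty forest to `1` and every
nonempty forest to `0`. -/
noncomputable def eps : RAlg k X Ω →ₗ[k] k :=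
  (Finsupp.lsum k fun F => LinearMap.toSpanSingleton k k
    (if (FreeMonoid.toList F).isEmpty then (1 : k) else 0)) ∘ₗ
    (MonoidAlgebra.coeffLinearEquiv k).toLinearMap

-- ==================== auxiliary lemmas ====================

lemma RAlg_lhom_ext {N : Type*} [AddCommMonoid N] [Module k N] ⦃φ ψ : RAlg k X Ω →ₗ[k] N⦄
    (h : ∀ a b, φ (MonoidAlgebra.single a b) = ψ (MonoidAlgebra.single a b)) : φ = ψ :=
  MonoidAlgebra.lhom_ext' fun a => LinearMap.ext fun b => h a b

lemma toList_mul (F G : RForest X Ω) :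
    FreeMonoid.toList (F * G) = FreeMonoid.toList F ++ FreeMonoid.toList G := rfl

lemma DeltaT_node (lam : k) (ω : Ω) (ts : List (PTree X Ω)) :
    DeltaT k lam (.node ω ts) =
      ((TensorProduct.map (Bplus k ω) LinearMap.id
        + TensorProduct.map LinearMap.id (Bplus k ω) :
          (RAlg k X Ω ⊗[k] RAlg k X Ω) →ₗ[k] (RAlg k X Ω ⊗[k] RAlg k X Ω)))
        ((ts.map (DeltaT k lam)).prod) := by
  rw [DeltaT]
  congr 2
  exact List.attach_map_val

lemma DeltaF_one (lam : k) : DeltaF k lam (1 : RForest X Ω) = 1 := rfl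

lemma DeltaF_mul (lam : k) (F G : RForest X Ω) :
    DeltaF k lam (F * G) = DeltaF k lam F * DeltaF k lam G := by
  unfold DeltaF
  rw [toList_mul, List.map_append, List.prod_append]

/-- `Δ_λ` on forests as a monoid hom. -/
noncomputable def DeltaM (lam : k) : RForest X Ω →* (RAlg k X Ω ⊗[k] RAlg k X Ω) where
  toFun := DeltaF k lam
  map_one' := DeltaF_one k lam
  map_mul' := DeltaF_mul k lam

/-- `Δ_λ` as an algebra hom. -/
noncomputable def DeltaA (lam : k) : RAlg k X Ω →ₐ[k] (RAlg k X Ω ⊗[k] RAlg k X Ω) :=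
  MonoidAlgebra.lift k _ _ (DeltaM k lam)

lemma Delta_single (lam : k) (F : RForest X Ω) (c : k) :
    Delta k lam (MonoidAlgebra.single F c) = c • DeltaF k lam F := by
  simp only [Delta, LinearMap.coe_comp, Function.comp_apply, LinearEquiv.coe_coe,
    MonoidAlgebra.coeffLinearEquiv_apply, MonoidAlgebra.coeff_single, Finsupp.lsum_single,
    LinearMap.toSpanSingleton_apply]

lemma Delta_eq (lam : k) : Delta k lam = (DeltaA k lam (X := X) (Ω := Ω)).toLinearMap := by
  apply RAlg_lhom_ext
  intro a b
  show Delta k lam (MonoidAlgebra.single a b) = DeltaA k lam (MonoidAlgebra.single a b)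
  rw [Delta_single, DeltaA, MonoidAlgebra.lift_single]
  rfl

lemma Delta_ofF (lam : k) (F : RForest X Ω) : Delta k lam (ofF k F) = DeltaF k lam F := by
  show Delta k lam (MonoidAlgebra.single F 1) = _
  rw [Delta_single, one_smul]

lemma epsFun_mul (F G : RForest X Ω) :
    (if (FreeMonoid.toList (F * G)).isEmpty then (1:k) else 0)
      = (if (FreeMonoid.toList F).isEmpty then (1:k) else 0)
        * (if (FreeMonoid.toList G).isEmpty then (1:k) else 0) := by
  rw [toList_mul]
  cases hF : FreeMonoid.toList F <;> cases hG : FreeMonoid.toList G <;> simp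

/-- `ε` on forests as a monoid hom. -/
noncomputable def epsM : RForest X Ω →* k where
  toFun F := if (FreeMonoid.toList F).isEmpty then (1:k) else 0
  map_one' := rfl
  map_mul' := epsFun_mul k

noncomputable def epsA : RAlg k X Ω →ₐ[k] k := MonoidAlgebra.lift k _ _ (epsM (X := X) (Ω := Ω) k)

lemma eps_single (F : RForest X Ω) (c : k) :
    eps k (MonoidAlgebra.single F c) =
      c * (if (FreeMonoid.toList F).isEmpty then (1:k) else 0) := by
  simp only [eps, LinearMap.coe_comp, Function.comp_apply, LinearEquiv.coe_coe,
    MonoidAlgebra.coeffLinearEquiv_apply, MonoidAlgebra.coeff_single, Finsupp.lsum_single,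
    LinearMap.toSpanSingleton_apply, smul_eq_mul]

lemma eps_eq : (eps k : RAlg k X Ω →ₗ[k] k) = (epsA k (X := X) (Ω := Ω)).toLinearMap := by
  apply RAlg_lhom_ext
  intro a b
  show eps k (MonoidAlgebra.single a b) = epsA k (MonoidAlgebra.single a b)
  rw [eps_single, epsA, MonoidAlgebra.lift_single]
  simp [epsM]

lemma ofF_def (F : RForest X Ω) : ofF k F = MonoidAlgebra.single F (1:k) := rfl

lemma Bplus_ofF (ω : Ω) (F : RForest X Ω) :
    Bplus k ω (ofF k F) = ofF k (graft ω F) := by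
  show MonoidAlgebra.mapDomainLinearMap k k (graft ω) (MonoidAlgebra.single F (1:k)) = _
  rw [MonoidAlgebra.mapDomainLinearMap_single]
  rfl

lemma ofF_one : ofF k (1 : RForest X Ω) = 1 := rfl

lemma ofF_mul (F G : RForest X Ω) : ofF k (F * G) = ofF k F * ofF k G := by
  rw [ofF_def, ofF_def, ofF_def, MonoidAlgebra.single_mul_single, one_mul]

lemma ofList_cons (t : PTree X Ω) (ts : List (PTree X Ω)) :
    (FreeMonoid.ofList (t :: ts) : RForest X Ω) = FreeMonoid.of t * FreeMonoid.ofList ts := rfl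

lemma ofF_ofList (ts : List (PTree X Ω)) :
    ofF k (FreeMonoid.ofList ts) = (ts.map (fun t => ofF k (FreeMonoid.of t))).prod := by
  induction ts with
  | nil => simpa using ofF_one k
  | cons t ts ih => rw [ofList_cons, ofF_mul, ih, List.map_cons, List.prod_cons]

lemma graft_ofList (ω : Ω) (ts : List (PTree X Ω)) :
    graft ω (FreeMonoid.ofList ts) = FreeMonoid.of (PTree.node ω ts) := rfl

lemma DeltaF_of (lam : k) (T : PTree X Ω) :
    DeltaF k lam (FreeMonoid.of T) = DeltaT k lam T := by
  show ([T].map (DeltaT k lam)).prod = _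
  simp

lemma DeltaF_ofList (lam : k) (ts : List (PTree X Ω)) :
    DeltaF k lam (FreeMonoid.ofList ts) = (ts.map (DeltaT k lam)).prod := rfl

/-- The operator `B⁺_ω ⊗ id + id ⊗ B⁺_ω`. -/
noncomputable def SB (ω : Ω) :
    (RAlg k X Ω ⊗[k] RAlg k X Ω) →ₗ[k] (RAlg k X Ω ⊗[k] RAlg k X Ω) :=
  TensorProduct.map (Bplus k ω) LinearMap.id + TensorProduct.map LinearMap.id (Bplus k ω)

lemma DeltaF_graft (lam : k) (ω : Ω) (F : RForest X Ω) :
    DeltaF k lam (graft ω F) = SB k ω (DeltaF k lam F) := by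
  show DeltaF k lam (FreeMonoid.of (PTree.node ω (FreeMonoid.toList F))) = _
  rw [DeltaF_of, DeltaT_node]
  rfl

lemma Delta_Bplus (lam : k) (ω : Ω) :
    (Delta k lam ∘ₗ Bplus k ω : RAlg k X Ω →ₗ[k] (RAlg k X Ω ⊗[k] RAlg k X Ω))
      = SB k ω ∘ₗ Delta k lam := by
  apply RAlg_lhom_ext
  intro a b
  show Delta k lam (MonoidAlgebra.mapDomainLinearMap k k (graft ω) (MonoidAlgebra.single a b)) =
    SB k ω (Delta k lam (MonoidAlgebra.single a b))
  rw [MonoidAlgebra.mapDomainLinearMap_single, Delta_single, Delta_single, map_smul, DeltaF_graft]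

lemma eps_graft (ω : Ω) (F : RForest X Ω) (c : k) :
    eps k (MonoidAlgebra.single (graft ω F) c) = 0 := by
  rw [eps_single]
  simp [graft, FreeMonoid.toList_of]

lemma eps_Bplus (ω : Ω) (a : RAlg k X Ω) : eps k (Bplus k ω a) = 0 := by
  have : eps k ∘ₗ Bplus k ω = (0 : RAlg k X Ω →ₗ[k] k) := by
    apply RAlg_lhom_ext
    intro a b
    show eps k (MonoidAlgebra.mapDomainLinearMap k k (graft ω) (MonoidAlgebra.single a b)) = 0
    rw [MonoidAlgebra.mapDomainLinearMap_single, eps_graft]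
  exact congrFun (congrArg (fun f => f.toFun) this) a

lemma eps_one' : eps k (1 : RAlg k X Ω) = 1 := by
  show eps k (MonoidAlgebra.single (1 : RForest X Ω) (1 : k)) = 1
  rw [eps_single]
  simp [FreeMonoid.toList_one]

lemma eps_leaf (x : X) : eps k (ofF k (leafF x : RForest X Ω)) = 0 := by
  rw [ofF_def, eps_single]
  simp [leafF, FreeMonoid.toList_of]

/-- `(ε ⊗ id)` followed by the left unitor. -/
noncomputable def rho : (RAlg k X Ω ⊗[k] RAlg k X Ω) →ₗ[k] RAlg k X Ω :=
  (TensorProduct.lid k (RAlg k X Ω)).toLinearMap ∘ₗ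
    TensorProduct.map (eps k) LinearMap.id

@[simp] lemma rho_tmul (a b : RAlg k X Ω) : rho k (a ⊗ₜ[k] b) = eps k a • b := by
  simp [rho]

noncomputable def rhoA : (RAlg k X Ω ⊗[k] RAlg k X Ω) →ₐ[k] RAlg k X Ω :=
  (Algebra.TensorProduct.lid k (RAlg k X Ω)).toAlgHom.comp
    (Algebra.TensorProduct.map (epsA k (X := X) (Ω := Ω)) (AlgHom.id k (RAlg k X Ω)))

lemma rho_eq : rho k (X := X) (Ω := Ω) = (rhoA k (X := X) (Ω := Ω)).toLinearMap := by
  apply TensorProduct.ext'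
  intro a b
  simp [rhoA, eps_eq, Algebra.TensorProduct.lid_tmul]

lemma rho_mapB (ω : Ω) :
    rho k ∘ₗ TensorProduct.map (Bplus k ω) (LinearMap.id (M := RAlg k X Ω)) = 0 := by
  apply TensorProduct.ext'
  intro a b
  simp [eps_Bplus]

lemma rho_mapidB (ω : Ω) :
    rho k ∘ₗ TensorProduct.map (LinearMap.id (M := RAlg k X Ω)) (Bplus k ω)
      = Bplus k ω ∘ₗ rho k := by
  apply TensorProduct.ext'
  intro a b
  simp [map_smul]

lemma rho_SB (ω : Ω) (z : RAlg k X Ω ⊗[k] RAlg k X Ω) :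
    rho k (SB k ω z) = Bplus k ω (rho k z) := by
  have h1 := LinearMap.congr_fun (rho_mapB k ω) z
  have h2 := LinearMap.congr_fun (rho_mapidB k ω) z
  simp only [LinearMap.comp_apply, LinearMap.zero_apply] at h1 h2
  simp only [SB, LinearMap.add_apply, map_add, h1, h2, zero_add]

lemma counitT (lam : k) : ∀ T : PTree X Ω, rho k (DeltaT k lam T) = ofF k (FreeMonoid.of T)
  | .leafX x => by
      rw [DeltaT]
      simp only [map_add, map_smul, rho_tmul, eps_leaf, eps_one', zero_smul, one_smul,
        smul_zero, add_zero, zero_add]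
      rfl
  | .node ω ts => by
      have IH : ∀ t ∈ ts, rho k (DeltaT k lam t) = ofF k (FreeMonoid.of t) :=
        fun t ht => counitT lam t
      rw [DeltaT_node]
      have hSB : rho k ((SB k ω) ((ts.map (DeltaT k lam)).prod))
          = Bplus k ω (rho k ((ts.map (DeltaT k lam)).prod)) := rho_SB k ω _
      rw [show (TensorProduct.map (Bplus k ω) LinearMap.id
        + TensorProduct.map LinearMap.id (Bplus k ω) :
          (RAlg k X Ω ⊗[k] RAlg k X Ω) →ₗ[k] (RAlg k X Ω ⊗[k] RAlg k X Ω)) = SB k ω from rfl,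
        hSB]
      have hprod : rho k ((ts.map (DeltaT k lam)).prod)
          = ofF k (FreeMonoid.ofList ts) := by
        have : rho k ((ts.map (DeltaT k lam)).prod)
            = rhoA k ((ts.map (DeltaT k lam)).prod) := LinearMap.congr_fun (rho_eq k) _
        rw [this, map_list_prod, List.map_map, ofF_ofList]
        congr 1
        refine List.map_congr_left (fun t ht => ?_)
        have h : (rho k) (DeltaT k lam t) = (rhoA k) (DeltaT k lam t) :=
          LinearMap.congr_fun (rho_eq k (X := X) (Ω := Ω)) (DeltaT k lam t)
        rw [Function.comp_apply, ← h, IH t ht]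
      rw [hprod, Bplus_ofF, graft_ofList]
termination_by T => sizeOf T
decreasing_by
  have := List.sizeOf_lt_of_mem ht
  simp only [PTree.node.sizeOf_spec]
  omega

lemma rho_prodT (lam : k) (ts : List (PTree X Ω)) :
    rho k ((ts.map (DeltaT k lam)).prod) = ofF k (FreeMonoid.ofList ts) := by
  have : rho k ((ts.map (DeltaT k lam)).prod)
      = rhoA k ((ts.map (DeltaT k lam)).prod) := LinearMap.congr_fun (rho_eq k) _
  rw [this, map_list_prod, List.map_map, ofF_ofList]
  congr 1
  refine List.map_congr_left (fun t ht => ?_)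
  have h : (rho k) (DeltaT k lam t) = (rhoA k) (DeltaT k lam t) :=
    LinearMap.congr_fun (rho_eq k (X := X) (Ω := Ω)) (DeltaT k lam t)
  rw [Function.comp_apply, ← h, counitT k lam t]

lemma counitF (lam : k) (F : RForest X Ω) :
    rho k (DeltaF k lam F) = ofF k F := by
  have := rho_prodT k lam (FreeMonoid.toList F)
  exact this

/-- `(id ⊗ ε)` followed by the right unitor. -/
noncomputable def rho' : (RAlg k X Ω ⊗[k] RAlg k X Ω) →ₗ[k] RAlg k X Ω :=
  (TensorProduct.rid k (RAlg k X Ω)).toLinearMap ∘ₗ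
    TensorProduct.map LinearMap.id (eps k)

@[simp] lemma rho'_tmul (a b : RAlg k X Ω) : rho' k (a ⊗ₜ[k] b) = eps k b • a := by
  simp [rho']

noncomputable def rhoA' : (RAlg k X Ω ⊗[k] RAlg k X Ω) →ₐ[k] RAlg k X Ω :=
  (Algebra.TensorProduct.rid k k (RAlg k X Ω)).toAlgHom.comp
    (Algebra.TensorProduct.map (AlgHom.id k (RAlg k X Ω)) (epsA k (X := X) (Ω := Ω)))

lemma rho'_eq : rho' k (X := X) (Ω := Ω) = (rhoA' k (X := X) (Ω := Ω)).toLinearMap := by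
  apply TensorProduct.ext'
  intro a b
  simp [rhoA', eps_eq, Algebra.TensorProduct.rid_tmul]

lemma rho'_mapB (ω : Ω) :
    rho' k ∘ₗ TensorProduct.map (LinearMap.id (M := RAlg k X Ω)) (Bplus k ω) = 0 := by
  apply TensorProduct.ext'
  intro a b
  simp [eps_Bplus]

lemma rho'_mapidB (ω : Ω) :
    rho' k ∘ₗ TensorProduct.map (Bplus k ω) (LinearMap.id (M := RAlg k X Ω))
      = Bplus k ω ∘ₗ rho' k := by
  apply TensorProduct.ext'
  intro a b
  simp [map_smul]

lemma rho'_SB (ω : Ω) (z : RAlg k X Ω ⊗[k] RAlg k X Ω) :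
    rho' k (SB k ω z) = Bplus k ω (rho' k z) := by
  have h1 := LinearMap.congr_fun (rho'_mapB k ω) z
  have h2 := LinearMap.congr_fun (rho'_mapidB k ω) z
  simp only [LinearMap.comp_apply, LinearMap.zero_apply] at h1 h2
  simp only [SB, LinearMap.add_apply, map_add, h1, h2, add_zero]

lemma counitT' (lam : k) : ∀ T : PTree X Ω, rho' k (DeltaT k lam T) = ofF k (FreeMonoid.of T)
  | .leafX x => by
      rw [DeltaT]
      simp only [map_add, map_smul, rho'_tmul, eps_leaf, eps_one', zero_smul, one_smul,
        smul_zero, add_zero, zero_add]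
      rfl
  | .node ω ts => by
      have IH : ∀ t ∈ ts, rho' k (DeltaT k lam t) = ofF k (FreeMonoid.of t) :=
        fun t ht => counitT' lam t
      rw [DeltaT_node]
      have hSB : rho' k ((SB k ω) ((ts.map (DeltaT k lam)).prod))
          = Bplus k ω (rho' k ((ts.map (DeltaT k lam)).prod)) := rho'_SB k ω _
      rw [show (TensorProduct.map (Bplus k ω) LinearMap.id
        + TensorProduct.map LinearMap.id (Bplus k ω) :
          (RAlg k X Ω ⊗[k] RAlg k X Ω) →ₗ[k] (RAlg k X Ω ⊗[k] RAlg k X Ω)) = SB k ω from rfl,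
        hSB]
      have hprod : rho' k ((ts.map (DeltaT k lam)).prod)
          = ofF k (FreeMonoid.ofList ts) := by
        have : rho' k ((ts.map (DeltaT k lam)).prod)
            = rhoA' k ((ts.map (DeltaT k lam)).prod) := LinearMap.congr_fun (rho'_eq k) _
        rw [this, map_list_prod, List.map_map, ofF_ofList]
        congr 1
        refine List.map_congr_left (fun t ht => ?_)
        have h : (rho' k) (DeltaT k lam t) = (rhoA' k) (DeltaT k lam t) :=
          LinearMap.congr_fun (rho'_eq k (X := X) (Ω := Ω)) (DeltaT k lam t)
        rw [Function.comp_apply, ← h, IH t ht]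
      rw [hprod, Bplus_ofF, graft_ofList]
termination_by T => sizeOf T
decreasing_by
  have := List.sizeOf_lt_of_mem ht
  simp only [PTree.node.sizeOf_spec]
  omega

lemma counitF' (lam : k) (F : RForest X Ω) :
    rho' k (DeltaF k lam F) = ofF k F := by
  have : rho' k ((((FreeMonoid.toList F)).map (DeltaT k lam)).prod)
      = rhoA' k ((((FreeMonoid.toList F)).map (DeltaT k lam)).prod) :=
    LinearMap.congr_fun (rho'_eq k) _
  show rho' k ((((FreeMonoid.toList F)).map (DeltaT k lam)).prod) = ofF k F
  rw [this, map_list_prod, List.map_map]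
  have h2 := ofF_ofList k (FreeMonoid.toList F)
  rw [show FreeMonoid.ofList (FreeMonoid.toList F) = F from rfl] at h2
  rw [h2]
  congr 1
  refine List.map_congr_left (fun t ht => ?_)
  have h : (rho' k) (DeltaT k lam t) = (rhoA' k) (DeltaT k lam t) :=
    LinearMap.congr_fun (rho'_eq k (X := X) (Ω := Ω)) (DeltaT k lam t)
  rw [Function.comp_apply, ← h, counitT' k lam t]

lemma counit_left (lam : k) :
    (TensorProduct.lid k (RAlg k X Ω)).toLinearMap ∘ₗ
        TensorProduct.map (eps k) LinearMap.id ∘ₗ Delta k lam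
      = (LinearMap.id : RAlg k X Ω →ₗ[k] RAlg k X Ω) := by
  apply RAlg_lhom_ext
  intro a b
  show rho k (Delta k lam (MonoidAlgebra.single a b)) = MonoidAlgebra.single a b
  rw [Delta_single, map_smul, counitF, ofF_def]
  simp

lemma counit_right (lam : k) :
    (TensorProduct.rid k (RAlg k X Ω)).toLinearMap ∘ₗ
        TensorProduct.map LinearMap.id (eps k) ∘ₗ Delta k lam
      = (LinearMap.id : RAlg k X Ω →ₗ[k] RAlg k X Ω) := by
  apply RAlg_lhom_ext
  intro a b
  show rho' k (Delta k lam (MonoidAlgebra.single a b)) = MonoidAlgebra.single a b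
  rw [Delta_single, map_smul, counitF', ofF_def]
  simp

lemma Delta_mul (lam : k) (x y : RAlg k X Ω) :
    Delta k lam (x * y) = Delta k lam x * Delta k lam y := by
  have h := Delta_eq (X := X) (Ω := Ω) k lam
  rw [show Delta k lam x = (DeltaA k lam) x from LinearMap.congr_fun h x,
    show Delta k lam y = (DeltaA k lam) y from LinearMap.congr_fun h y,
    show Delta k lam (x * y) = (DeltaA k lam) (x * y) from LinearMap.congr_fun h _,
    map_mul]

lemma Delta_one (lam : k) : Delta k lam (1 : RAlg k X Ω) = 1 := by
  rw [show Delta k lam (1 : RAlg k X Ω) = (DeltaA k lam) 1 from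
    LinearMap.congr_fun (Delta_eq (X := X) (Ω := Ω) k lam) 1, map_one]

lemma eps_mul (x y : RAlg k X Ω) : eps k (x * y) = eps k x * eps k y := by
  have h := eps_eq (X := X) (Ω := Ω) k
  rw [show eps k x = (epsA k) x from LinearMap.congr_fun h x,
    show eps k y = (epsA k) y from LinearMap.congr_fun h y,
    show eps k (x * y) = (epsA k) (x * y) from LinearMap.congr_fun h _,
    map_mul]

set_option synthInstance.maxHeartbeats 1000000
set_option maxHeartbeats 1000000

/-- The associator as a linear map. -/
noncomputable def A3 : ((RAlg k X Ω ⊗[k] RAlg k X Ω) ⊗[k] RAlg k X Ω) →ₗ[k]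
    (RAlg k X Ω ⊗[k] (RAlg k X Ω ⊗[k] RAlg k X Ω)) :=
  (TensorProduct.assoc k (RAlg k X Ω) (RAlg k X Ω) (RAlg k X Ω)).toLinearMap

/-- Coassociativity LHS as an algebra hom. -/
noncomputable def LA (lam : k) : RAlg k X Ω →ₐ[k] (RAlg k X Ω ⊗[k] (RAlg k X Ω ⊗[k] RAlg k X Ω)) :=
  ((Algebra.TensorProduct.assoc k k k (RAlg k X Ω) (RAlg k X Ω) (RAlg k X Ω)).toAlgHom.comp
    ((Algebra.TensorProduct.map (DeltaA k lam (X := X) (Ω := Ω)) (AlgHom.id k (RAlg k X Ω))).comp (DeltaA k lam (X := X) (Ω := Ω))))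

/-- Coassociativity RHS as an algebra hom. -/
noncomputable def RA (lam : k) : RAlg k X Ω →ₐ[k] (RAlg k X Ω ⊗[k] (RAlg k X Ω ⊗[k] RAlg k X Ω)) :=
  (Algebra.TensorProduct.map (AlgHom.id k (RAlg k X Ω)) (DeltaA k lam (X := X) (Ω := Ω))).comp (DeltaA k lam (X := X) (Ω := Ω))

lemma mapDelta_eq (lam : k) :
    TensorProduct.map (Delta k lam) (LinearMap.id (M := RAlg k X Ω))
      = (Algebra.TensorProduct.map (DeltaA k lam (X := X) (Ω := Ω)) (AlgHom.id k (RAlg k X Ω))).toLinearMap := by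
  apply TensorProduct.ext'
  intro a b
  simp [Delta_eq, Algebra.TensorProduct.map_tmul]

lemma mapDelta'_eq (lam : k) :
    TensorProduct.map (LinearMap.id (M := RAlg k X Ω)) (Delta k lam)
      = (Algebra.TensorProduct.map (AlgHom.id k (RAlg k X Ω)) (DeltaA k lam (X := X) (Ω := Ω))).toLinearMap := by
  apply TensorProduct.ext'
  intro a b
  simp [Delta_eq, Algebra.TensorProduct.map_tmul]

lemma A3_eq : A3 k (X := X) (Ω := Ω)
    = (Algebra.TensorProduct.assoc k k k (RAlg k X Ω) (RAlg k X Ω) (RAlg k X Ω)).toAlgHom.toLinearMap := by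
  apply TensorProduct.ext_threefold
  intro a b c
  simp [A3, Algebra.TensorProduct.assoc_tmul]

lemma L_eq (lam : k) :
    ((TensorProduct.assoc k (RAlg k X Ω) (RAlg k X Ω) (RAlg k X Ω)).toLinearMap ∘ₗ
        TensorProduct.map (Delta k lam) LinearMap.id ∘ₗ Delta k lam)
      = (LA k lam (X := X) (Ω := Ω)).toLinearMap := by
  rw [show (TensorProduct.assoc k (RAlg k X Ω) (RAlg k X Ω) (RAlg k X Ω)).toLinearMap
      = A3 k (X := X) (Ω := Ω) from rfl, A3_eq, mapDelta_eq, Delta_eq]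
  rfl

lemma R_eq (lam : k) :
    (TensorProduct.map LinearMap.id (Delta k lam) ∘ₗ Delta k lam
      : RAlg k X Ω →ₗ[k] (RAlg k X Ω ⊗[k] (RAlg k X Ω ⊗[k] RAlg k X Ω)))
      = (RA k lam (X := X) (Ω := Ω)).toLinearMap := by
  rw [mapDelta'_eq, Delta_eq]
  rfl

/-- `B ⊗ id ⊗ id + id ⊗ B ⊗ id + id ⊗ id ⊗ B` on `H ⊗ (H ⊗ H)`. -/
noncomputable def N3 (ω : Ω) : (RAlg k X Ω ⊗[k] (RAlg k X Ω ⊗[k] RAlg k X Ω)) →ₗ[k]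
    (RAlg k X Ω ⊗[k] (RAlg k X Ω ⊗[k] RAlg k X Ω)) :=
  TensorProduct.map (Bplus k ω) LinearMap.id
    + TensorProduct.map LinearMap.id (TensorProduct.map (Bplus k ω) LinearMap.id)
    + TensorProduct.map LinearMap.id (TensorProduct.map LinearMap.id (Bplus k ω))

lemma key_left (lam : k) (ω : Ω) :
    (A3 k ∘ₗ TensorProduct.map (Delta k lam) LinearMap.id) ∘ₗ SB k ω
      = (N3 k ω ∘ₗ A3 k) ∘ₗ TensorProduct.map (Delta k lam) (LinearMap.id (M := RAlg k X Ω)) := by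
  apply TensorProduct.ext'
  intro a b
  have hBa : Delta k lam (Bplus k ω a) = SB k ω (Delta k lam a) :=
    LinearMap.congr_fun (Delta_Bplus k lam ω) a
  simp only [LinearMap.comp_apply, SB, LinearMap.add_apply, TensorProduct.map_tmul,
    LinearMap.id_apply, map_add, hBa]
  -- now a general identity in z := Delta k lam a
  generalize (Delta k lam a) = z
  induction z using TensorProduct.induction_on with
  | zero => simp
  | tmul c d =>
      simp only [SB, LinearMap.add_apply, TensorProduct.map_tmul, LinearMap.id_apply,
        TensorProduct.add_tmul, map_add, A3, TensorProduct.assoc_tmul, N3,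
        TensorProduct.tmul_add]
      abel
  | add z₁ z₂ h1 h2 =>
      simp only [map_add, TensorProduct.add_tmul] at h1 h2 ⊢
      rw [← h1, ← h2]
      abel

lemma key_right (lam : k) (ω : Ω) :
    TensorProduct.map (LinearMap.id (M := RAlg k X Ω)) (Delta k lam) ∘ₗ SB k ω
      = N3 k ω ∘ₗ TensorProduct.map (LinearMap.id (M := RAlg k X Ω)) (Delta k lam) := by
  apply TensorProduct.ext'
  intro a b
  have hBb : Delta k lam (Bplus k ω b) = SB k ω (Delta k lam b) :=
    LinearMap.congr_fun (Delta_Bplus k lam ω) b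
  simp only [LinearMap.comp_apply, SB, LinearMap.add_apply, TensorProduct.map_tmul,
    LinearMap.id_apply, map_add, hBb]
  generalize (Delta k lam b) = w
  induction w using TensorProduct.induction_on with
  | zero => simp
  | tmul c d =>
      simp only [SB, LinearMap.add_apply, TensorProduct.map_tmul, LinearMap.id_apply,
        TensorProduct.tmul_add, map_add, N3]
      abel
  | add w₁ w₂ h1 h2 =>
      simp only [map_add, TensorProduct.tmul_add] at h1 h2 ⊢
      rw [← h1, ← h2]
      abel

lemma LA_apply (lam : k) (x : RAlg k X Ω) :
    LA k lam x
      = A3 k (TensorProduct.map (Delta k lam) LinearMap.id (Delta k lam x)) := by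
  have h := LinearMap.congr_fun (L_eq k lam) x
  simp only [LinearMap.comp_apply, AlgHom.toLinearMap_apply] at h
  exact h.symm

lemma RA_apply (lam : k) (x : RAlg k X Ω) :
    RA k lam x
      = TensorProduct.map LinearMap.id (Delta k lam) (Delta k lam x) := by
  have h := LinearMap.congr_fun (R_eq k lam) x
  simp only [LinearMap.comp_apply, AlgHom.toLinearMap_apply] at h
  exact h.symm

instance instMHC_RAlg3 : MonoidHomClass (RAlg k X Ω →ₐ[k] RAlg k X Ω ⊗[k] (RAlg k X Ω ⊗[k] RAlg k X Ω))
    (RAlg k X Ω) (RAlg k X Ω ⊗[k] (RAlg k X Ω ⊗[k] RAlg k X Ω)) :=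
  RingHomClass.toMonoidHomClass

lemma coassocT (lam : k) :
    ∀ T : PTree X Ω, LA k lam (ofF k (FreeMonoid.of T)) = RA k lam (ofF k (FreeMonoid.of T))
  | .leafX x => by
      rw [LA_apply, RA_apply]
      set a := ofF k (leafF x : RForest X Ω) with ha
      have hΔa : Delta k lam (ofF k (FreeMonoid.of (PTree.leafX x)))
          = a ⊗ₜ[k] 1 + 1 ⊗ₜ[k] a + lam • (a ⊗ₜ[k] a) := by
        rw [Delta_ofF, DeltaF_of, DeltaT]
      have hΔ1 : Delta k lam (1 : RAlg k X Ω) = (1 : RAlg k X Ω) ⊗ₜ[k] (1 : RAlg k X Ω) := by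
        rw [Delta_one (X := X) (Ω := Ω)]; rfl
      have haa : Delta k lam a = a ⊗ₜ[k] 1 + 1 ⊗ₜ[k] a + lam • (a ⊗ₜ[k] a) := hΔa
      simp only [LinearMap.comp_apply, hΔa, map_add, map_smul, TensorProduct.map_tmul,
        LinearMap.id_apply, haa, hΔ1, TensorProduct.add_tmul, TensorProduct.tmul_add,
        TensorProduct.smul_tmul, TensorProduct.tmul_smul,
        A3, TensorProduct.assoc_tmul, LinearEquiv.coe_coe]
      module
  | .node ω ts => by
      have IH : ∀ t ∈ ts, LA k lam (ofF k (FreeMonoid.of t)) = RA k lam (ofF k (FreeMonoid.of t)) :=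
        fun t ht => coassocT lam t
      rw [LA_apply, RA_apply]
      set u := ofF k (FreeMonoid.ofList ts : RForest X Ω) with hu
      have hΔe : Delta k lam (ofF k (FreeMonoid.of (PTree.node ω ts)))
          = SB k ω (Delta k lam u) := by
        rw [Delta_ofF, DeltaF_of, DeltaT_node, Delta_ofF, DeltaF_ofList]
        rfl
      -- IH at the forest u
      have hIHu : LA k lam u = RA k lam u := by
        rw [hu, ofF_ofList, map_list_prod, map_list_prod, List.map_map, List.map_map]
        congr 1
        refine List.map_congr_left (fun t ht => ?_)
        simpa using IH t ht
      have hIHu' : A3 k (TensorProduct.map (Delta k lam) LinearMap.id (Delta k lam u))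
          = TensorProduct.map LinearMap.id (Delta k lam) (Delta k lam u) := by
        rw [← LA_apply, ← RA_apply]; exact hIHu
      have h1 := LinearMap.congr_fun (key_left k lam ω) (Delta k lam u)
      have h2 := LinearMap.congr_fun (key_right k lam ω) (Delta k lam u)
      simp only [LinearMap.comp_apply] at h1 h2
      rw [hΔe, h1, h2, hIHu']
termination_by T => sizeOf T
decreasing_by
  have := List.sizeOf_lt_of_mem ht
  simp only [PTree.node.sizeOf_spec]
  omega

lemma coassocF (lam : k) (F : RForest X Ω) :
    LA k lam (ofF k F) = RA k lam (ofF k F) := by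
  rw [show F = FreeMonoid.ofList (FreeMonoid.toList F) from rfl, ofF_ofList,
    map_list_prod, map_list_prod, List.map_map, List.map_map]
  congr 1
  exact List.map_congr_left fun t ht => by simpa using coassocT k lam t

lemma coassoc (lam : k) :
    ((TensorProduct.assoc k (RAlg k X Ω) (RAlg k X Ω) (RAlg k X Ω)).toLinearMap ∘ₗ
        TensorProduct.map (Delta k lam) LinearMap.id ∘ₗ Delta k lam
      = TensorProduct.map LinearMap.id (Delta k lam) ∘ₗ Delta k lam) := by
  rw [L_eq, R_eq]
  congr 1
  refine MonoidAlgebra.algHom_ext ?_ (Subsingleton.elim _ _)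
  intro F
  exact coassocF k lam F
/-- `(H(X,Ω), m, 1, Δ_λ, ε)` is a `k`-bialgebra: `(H(X,Ω), Δ_λ, ε)` is a coassociative
counital coalgebra and `Δ_λ` and `ε` are algebra homomorphisms. -/
theorem bialgebra_structure [Nonempty Ω] (lam : k) :
    -- coassociativity
    ((TensorProduct.assoc k (RAlg k X Ω) (RAlg k X Ω) (RAlg k X Ω)).toLinearMap ∘ₗ
        TensorProduct.map (Delta k lam) LinearMap.id ∘ₗ Delta k lam
      = TensorProduct.map LinearMap.id (Delta k lam) ∘ₗ Delta k lam) ∧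
    -- counit laws
    ((TensorProduct.lid k (RAlg k X Ω)).toLinearMap ∘ₗ
        TensorProduct.map (eps k) LinearMap.id ∘ₗ Delta k lam
      = (LinearMap.id : RAlg k X Ω →ₗ[k] RAlg k X Ω)) ∧
    ((TensorProduct.rid k (RAlg k X Ω)).toLinearMap ∘ₗ
        TensorProduct.map LinearMap.id (eps k) ∘ₗ Delta k lam
      = (LinearMap.id : RAlg k X Ω →ₗ[k] RAlg k X Ω)) ∧
    -- `Δ_λ` is an algebra homomorphism
    (∀ x y : RAlg k X Ω, Delta k lam (x * y) = Delta k lam x * Delta k lam y) ∧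
    (Delta k lam (1 : RAlg k X Ω) = 1) ∧
    -- `ε` is an algebra homomorphism
    (∀ x y : RAlg k X Ω, eps k (x * y) = eps k x * eps k y) ∧
    (eps k (1 : RAlg k X Ω) = 1) := by
  exact ⟨coassoc k lam, counit_left k lam, counit_right k lam,
    Delta_mul k lam, Delta_one k lam, eps_mul k, eps_one' k⟩

end Moerdijk
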